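/- arXiv:2204.01074 — 5 statements merged into one kernel-verified Lean document; each statement's English description precedes it below -/
import Mathlib

section
/- Let G be a multigraph with χ'(G) = k and let H be a k-dense subgraph of G. Then for every k-edge-coloring φ of G, the subgraph H is φ_H-elementary and strongly φ-closed, where φ_H is the restriction of φ to E(H). -/
/-- A finite multigraph: finite vertex and edge types, each edge has an unordered pair of
endvertices, and there are no loops. -/
structure Multigraph where
  V : Type
  E : Type
  [fintypeV : Fintype V]
  [fintypeE : Fintype E]
  ends : E → Sym2 V
  loopless : ∀ e, ¬ (ends e).IsDiag

attribute [instance] Multigraph.fintypeV Multigraph.fintypeE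

namespace Multigraph

section Basic

variable (G : Multigraph)

/-- The degree of a vertex: the number of edges incident with it. -/
noncomputable def degree (v : G.V) : ℕ := {e : G.E | v ∈ G.ends e}.ncard

/-- The maximum degree Δ(G). -/
noncomputable def maxDegree : ℕ := sSup (Set.range G.degree)

/-- The number of edges joining `x` and `y` (the multiplicity e_G(x,y)). -/
noncomputable def mult (x y : G.V) : ℕ := {e : G.E | G.ends e = s(x, y)}.ncard

/-- The maximum multiplicity μ(G). -/
noncomputable def maxMult : ℕ := sSup {m : ℕ | ∃ x y : G.V, G.mult x y = m}

/-- `c` is a proper edge coloring, with palette `{1,…,k}`, of the edges in `D`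
(edges sharing an endvertex get distinct colors). -/
def IsProperColoringOn (k : ℕ) (D : Set G.E) (c : G.E → ℕ) : Prop :=
  (∀ e ∈ D, c e ∈ Set.Icc 1 k) ∧
  ∀ e ∈ D, ∀ f ∈ D, e ≠ f → (∃ v, v ∈ G.ends e ∧ v ∈ G.ends f) → c e ≠ c f

/-- A proper `k`-edge-coloring of all of `G`. -/
def IsProperColoring (k : ℕ) (c : G.E → ℕ) : Prop := G.IsProperColoringOn k Set.univ c

/-- The chromatic index of the subgraph of `G` consisting of the edges in `D`
(vertices are irrelevant for edge colorings). -/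
noncomputable def chromIndexOn (D : Set G.E) : ℕ := sInf {k | ∃ c, G.IsProperColoringOn k D c}

/-- The chromatic index χ'(G). -/
noncomputable def chromIndex : ℕ := G.chromIndexOn Set.univ

/-- The set of colors of the palette `{1,…,k}` missing at `v`, where only the edges in `D`
are regarded as colored. -/
def missingOn (k : ℕ) (D : Set G.E) (c : G.E → ℕ) (v : G.V) : Set ℕ :=
  {i | i ∈ Set.Icc 1 k ∧ ∀ e ∈ D, v ∈ G.ends e → c e ≠ i}

/-- `X` is elementary: missing-color sets of distinct vertices of `X` are disjoint. -/
def IsElementaryOn (k : ℕ) (D : Set G.E) (c : G.E → ℕ) (X : Set G.V) : Prop :=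
  ∀ u ∈ X, ∀ v ∈ X, u ≠ v → G.missingOn k D c u ∩ G.missingOn k D c v = ∅

/-- The boundary ∂_G(X): edges with an endvertex in `X` and an endvertex outside `X`. -/
def boundary (X : Set G.V) : Set G.E :=
  {e | (∃ v ∈ G.ends e, v ∈ X) ∧ (∃ v ∈ G.ends e, v ∉ X)}

/-- `X` is strongly closed (w.r.t. the coloring `c` of the edges in `D`): every color on a
boundary edge of `X` is present at every vertex of `X`, and the colors on the boundary edges
are pairwise distinct. -/
def IsStronglyClosedOn (D : Set G.E) (c : G.E → ℕ) (X : Set G.V) : Prop :=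
  (∀ e ∈ G.boundary X ∩ D, ∀ v ∈ X, ∃ f ∈ D, v ∈ G.ends f ∧ c f = c e) ∧
  ∀ e ∈ G.boundary X ∩ D, ∀ f ∈ G.boundary X ∩ D, e ≠ f → c e ≠ c f

end Basic

/-- A subgraph of `G`: a set of vertices together with a set of edges all of whose
endvertices belong to the vertex set. -/
structure Subgraph (G : Multigraph) where
  verts : Set G.V
  edges : Set G.E
  support : ∀ e ∈ edges, ∀ v, v ∈ G.ends e → v ∈ verts

section Sub

variable (G : Multigraph)

/-- The whole graph, as a subgraph of itself. -/
def top : G.Subgraph := ⟨Set.univ, Set.univ, fun _ _ _ _ => Set.mem_univ _⟩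

/-- `H` is a `k`-dense subgraph: it has an odd number of vertices and
`|E(H)| = (|V(H)|-1)·k/2`. -/
def IsDense (k : ℕ) (H : G.Subgraph) : Prop :=
  Odd H.verts.ncard ∧ 2 * H.edges.ncard = (H.verts.ncard - 1) * k

/-- `H` is a `k`-dense subgraph of `G - F` (the graph obtained by deleting the edges of `F`). -/
def IsDenseIn (F : Set G.E) (k : ℕ) (H : G.Subgraph) : Prop :=
  H.edges ∩ F = ∅ ∧ G.IsDense k H

/-- `H` is a maximal `k`-dense subgraph of `G - F`. -/
def IsMaximalDenseIn (F : Set G.E) (k : ℕ) (H : G.Subgraph) : Prop :=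
  G.IsDenseIn F k H ∧
  ∀ H' : G.Subgraph, G.IsDenseIn F k H' → H.verts ⊆ H'.verts → H.edges ⊆ H'.edges →
    H.verts = H'.verts ∧ H.edges = H'.edges

/-- The density Γ(H) of a subgraph `H` of `G`:
`max { 2|E(H')|/(|V(H')|-1) : H' ⊆ H, |V(H')| ≥ 3 odd }` (and `0` if there is no such `H'`,
since in `ℝ` the supremum of the empty set is `0`). -/
noncomputable def densityOf (H : G.Subgraph) : ℝ :=
  sSup {x : ℝ | ∃ H' : G.Subgraph, H'.verts ⊆ H.verts ∧ H'.edges ⊆ H.edges ∧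
    3 ≤ H'.verts.ncard ∧ Odd H'.verts.ncard ∧
    x = 2 * (H'.edges.ncard : ℝ) / ((H'.verts.ncard : ℝ) - 1)}

/-- The density Γ(G). -/
noncomputable def density : ℝ := G.densityOf G.top

/-- `e` is a `k`-critical edge of `G`: `χ'(G-e) = k < χ'(G) = k+1`. -/
def IsCriticalEdge (k : ℕ) (e : G.E) : Prop :=
  G.chromIndexOn {e}ᶜ = k ∧ G.chromIndex = k + 1

/-- Degree of `v` in the subgraph consisting of the edges in `D`. -/
noncomputable def degreeOn (D : Set G.E) (v : G.V) : ℕ := {e : G.E | e ∈ D ∧ v ∈ G.ends e}.ncard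

/-- Maximum degree of the subgraph consisting of the edges in `D`. -/
noncomputable def maxDegreeOn (D : Set G.E) : ℕ := sSup (Set.range (G.degreeOn D))

/-- Multiplicity of the pair `x,y` in the subgraph consisting of the edges in `D`. -/
noncomputable def multOn (D : Set G.E) (x y : G.V) : ℕ :=
  {e : G.E | e ∈ D ∧ G.ends e = s(x, y)}.ncard

/-- Maximum multiplicity of the subgraph consisting of the edges in `D`. -/
noncomputable def maxMultOn (D : Set G.E) : ℕ := sSup {m : ℕ | ∃ x y : G.V, G.multOn D x y = m}

/-- The simple graph underlying the subgraph of `G` with edge set `D`. -/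
def simpleOn (D : Set G.E) : SimpleGraph G.V where
  Adj a b := a ≠ b ∧ ∃ e ∈ D, G.ends e = s(a, b)
  symm := by
    constructor
    rintro a b ⟨hab, e, he, hh⟩
    exact ⟨hab.symm, e, he, hh.trans Sym2.eq_swap⟩
  loopless := by constructor; rintro a ⟨h, -⟩; exact h rfl

/-- The diameter (in `ℕ∞`) of the subgraph with vertex set `S` and edge set `D`:
the greatest distance between a pair of its vertices. -/
noncomputable def diamOn (S : Set G.V) (D : Set G.E) : ℕ∞ :=
  sSup {d : ℕ∞ | ∃ u ∈ S, ∃ v ∈ S, (G.simpleOn D).edist u v = d}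

/-- The distance (in `ℕ∞`) between two edges of `G`: the length of a shortest path connecting
an endvertex of `e` and an endvertex of `f`. -/
noncomputable def edgeDist (e f : G.E) : ℕ∞ :=
  sInf {d : ℕ∞ | ∃ u v : G.V, u ∈ G.ends e ∧ v ∈ G.ends f ∧
    (G.simpleOn Set.univ).edist u v = d}

/-- A matching: a set of edges no two of which share an endvertex. -/
def IsMatching (M : Set G.E) : Prop :=
  ∀ e ∈ M, ∀ f ∈ M, e ≠ f → ∀ v : G.V, v ∈ G.ends e → v ∉ G.ends f

/-- An edge `e ∈ E_G(x,y)` is fully `G`-saturated if `d_G(x) = d_G(y) = Δ(G)` and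
`e_G(x,y) = μ(G)`. -/
def IsFullySaturated (e : G.E) : Prop :=
  ∃ x y : G.V, G.ends e = s(x, y) ∧ G.degree x = G.maxDegree ∧ G.degree y = G.maxDegree ∧
    G.mult x y = G.maxMult

/-- One step along a Kempe `(α,β)`-chain: an edge of `D` colored `α` or `β` joining the
two vertices. -/
def chainStep (D : Set G.E) (c : G.E → ℕ) (α β : ℕ) (a b : G.V) : Prop :=
  ∃ e ∈ D, G.ends e = s(a, b) ∧ (c e = α ∨ c e = β)

/-- `u` and `v` lie on the same `(α,β)`-chain, i.e. `P_u(α,β) = P_v(α,β)`. -/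
def sameChain (D : Set G.E) (c : G.E → ℕ) (α β : ℕ) (u v : G.V) : Prop :=
  Relation.ReflTransGen (G.chainStep D c α β) u v

end Sub

/-- The Goldberg–Seymour theorem (proved by Chen, Jing and Zang), as a hypothesis:
every multigraph `G'` with `χ'(G') ≥ Δ(G')+2` satisfies `χ'(G') = ⌈Γ(G')⌉`. -/
def GoldbergSeymour : Prop :=
  ∀ G' : Multigraph, G'.maxDegree + 2 ≤ G'.chromIndex → (G'.chromIndex : ℤ) = ⌈G'.density⌉

/-- A (general) multi-fan at `x` with respect to the edge `e₀ ∈ E_G(x,y₀)` and the coloring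
`c` of the edges in `D` with palette `{1,…,k}`: a sequence `(x, e₀, y₀, e₁, y₁, …, e_p, y_p)`
of vertices and pairwise distinct edges with `e_i ∈ E_G(x, y_i)` and, for `i ≥ 1`,
`c(e_i)` missing at `y_j` for some `j < i`. -/
structure MultiFan (G : Multigraph) (k : ℕ) (D : Set G.E) (c : G.E → ℕ)
    (x : G.V) (e₀ : G.E) (y₀ : G.V) where
  p : ℕ
  edge : Fin (p + 1) → G.E
  vx : Fin (p + 1) → G.V
  edge_zero : edge 0 = e₀
  vx_zero : vx 0 = y₀
  ends_eq : ∀ i, G.ends (edge i) = s(x, vx i)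
  edge_inj : Function.Injective edge
  fan_cond : ∀ i : Fin (p + 1), i ≠ 0 →
    ∃ j : Fin (p + 1), j < i ∧ c (edge i) ∈ G.missingOn k D c (vx j)

namespace MultiFan

variable {G : Multigraph} {k : ℕ} {D : Set G.E} {c : G.E → ℕ} {x : G.V} {e₀ : G.E} {y₀ : G.V}

/-- The vertex set `V(F)` of a multi-fan. -/
def verts (F : MultiFan G k D c x e₀ y₀) : Set G.V := insert x (Set.range F.vx)

/-- `F` is a subsequence of `F'`. -/
def Subseq (F F' : MultiFan G k D c x e₀ y₀) : Prop :=
  ∃ ι : Fin (F.p + 1) → Fin (F'.p + 1), StrictMono ι ∧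
    ∀ i, F'.edge (ι i) = F.edge i ∧ F'.vx (ι i) = F.vx i

/-- `F` is a maximal multi-fan: no multi-fan contains it as a proper subsequence. -/
def IsMaximal (F : MultiFan G k D c x e₀ y₀) : Prop :=
  ∀ F' : MultiFan G k D c x e₀ y₀, F.Subseq F' → F'.p = F.p

/-- `F` contains no `i`-edge. -/
def NoColor (F : MultiFan G k D c x e₀ y₀) (i : ℕ) : Prop :=
  ∀ j, F.edge j ∈ D → c (F.edge j) ≠ i

/-- `F` is a multi-fan without `i`-edges that is maximal among such. -/
def IsMaximalWithout (F : MultiFan G k D c x e₀ y₀) (i : ℕ) : Prop :=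
  F.NoColor i ∧
  ∀ F' : MultiFan G k D c x e₀ y₀, F'.NoColor i → F.Subseq F' → F'.p = F.p

/-- `e_F(x,z)`: the number of edges of the multi-fan `F` joining `x` and `z`. -/
noncomputable def multAt (F : MultiFan G k D c x e₀ y₀) (z : G.V) : ℕ :=
  Nat.card {j : Fin (F.p + 1) // F.vx j = z}

end MultiFan

end Multigraph
open Finset in
private theorem dense_key (G : Multigraph) (k : ℕ) (H : G.Subgraph) (hH : G.IsDense k H)
    (φ : G.E → ℕ) (hφ : G.IsProperColoring k φ)
    {α : ℕ} (hα : α ∈ Set.Icc 1 k) {u v : G.V} (hu : u ∈ H.verts) (hv : v ∈ H.verts)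
    (huv : u ≠ v) (hmu : ∀ e ∈ H.edges, u ∈ G.ends e → φ e ≠ α)
    (hmv : ∀ e ∈ H.edges, v ∈ G.ends e → φ e ≠ α) : False := by
  classical
  obtain ⟨hodd, hcount⟩ := hH
  obtain ⟨t, ht⟩ := hodd
  set Cls : ℕ → Finset G.E := fun β => Finset.univ.filter (fun e => e ∈ H.edges ∧ φ e = β)
    with hCls
  set EH : Finset G.E := Finset.univ.filter (· ∈ H.edges) with hEH
  set VH : Finset G.V := Finset.univ.filter (· ∈ H.verts) with hVH
  set endF : G.E → Finset G.V := fun e => Finset.univ.filter (· ∈ G.ends e) with hendF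
  have hVHcard : VH.card = H.verts.ncard := by
    rw [← Set.ncard_coe_finset]; congr 1; ext x; simp [hVH]
  have hEHcard : EH.card = H.edges.ncard := by
    rw [← Set.ncard_coe_finset]; congr 1; ext x; simp [hEH]
  have hends2 : ∀ e : G.E, (endF e).card = 2 := by
    intro e
    obtain ⟨a, b, hab⟩ : ∃ a b, G.ends e = s(a, b) := by
      induction G.ends e using Sym2.ind with
      | _ a b => exact ⟨a, b, rfl⟩
    have hne : a ≠ b := by have := G.loopless e; rw [hab] at this; simpa using this
    have : endF e = {a, b} := by
      ext x; simp [hendF, hab, Sym2.mem_iff]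
    rw [this, card_insert_of_notMem (by simpa using hne), card_singleton]
  -- each color class is a matching; its covered set has card 2 * class size
  have hdisj : ∀ β, ∀ e ∈ Cls β, ∀ f ∈ Cls β, e ≠ f → Disjoint (endF e) (endF f) := by
    intro β e he f hf hef
    simp only [hCls, mem_filter] at he hf
    rw [Finset.disjoint_left]
    intro x hxe hxf
    simp only [hendF, mem_filter] at hxe hxf
    exact hφ.2 e (Set.mem_univ _) f (Set.mem_univ _) hef ⟨x, hxe.2, hxf.2⟩
      (he.2.2.trans hf.2.2.symm)
  have hcov : ∀ β, ((Cls β).biUnion endF).card = 2 * (Cls β).card := by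
    intro β
    rw [card_biUnion (fun e he f hf hef => hdisj β e he f hf hef)]
    rw [Finset.sum_congr rfl (fun e _ => hends2 e), Finset.sum_const, smul_eq_mul, mul_comm]
  -- covered set is inside VH
  have hcovsub : ∀ β, (Cls β).biUnion endF ⊆ VH := by
    intro β x hx
    simp only [mem_biUnion, hCls, hendF, mem_filter] at hx
    obtain ⟨e, ⟨-, heH, -⟩, -, hxe⟩ := hx
    simp only [hVH, mem_filter, mem_univ, true_and]
    exact H.support e heH x hxe
  -- bound: each class ≤ t
  have hclsle : ∀ β, (Cls β).card ≤ t := by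
    intro β
    have h1 : 2 * (Cls β).card ≤ VH.card := by
      rw [← hcov β]; exact card_le_card (hcovsub β)
    rw [hVHcard, ht] at h1; omega
  -- the class of α misses u and v hence ≤ t - 1
  have huvVH : u ∈ VH ∧ v ∈ VH := by
    constructor <;> simp [hVH, hu, hv]
  have hclsalt : (Cls α).card < t := by
    have hsub : (Cls α).biUnion endF ⊆ VH \ {u, v} := by
      intro x hx
      have hxVH := hcovsub α hx
      simp only [mem_biUnion, hCls, hendF, mem_filter] at hx
      obtain ⟨e, ⟨-, heH, heφ⟩, -, hxe⟩ := hx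
      rw [mem_sdiff]
      refine ⟨hxVH, ?_⟩
      simp only [mem_insert, mem_singleton]
      rintro (rfl | rfl)
      · exact hmu e heH hxe heφ
      · exact hmv e heH hxe heφ
    have huvsub : ({u, v} : Finset G.V) ⊆ VH := by
      intro x hx
      simp only [mem_insert, mem_singleton] at hx
      rcases hx with rfl | rfl
      · exact huvVH.1
      · exact huvVH.2
    have huvcard : ({u, v} : Finset G.V).card = 2 := by
      rw [card_insert_of_notMem (by simpa using huv), card_singleton]
    have h1 : 2 * (Cls α).card ≤ VH.card - 2 := by
      rw [← hcov α]
      calc ((Cls α).biUnion endF).card ≤ (VH \ {u, v}).card := card_le_card hsub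
        _ = VH.card - ({u, v} : Finset G.V).card := card_sdiff_of_subset huvsub
        _ = VH.card - 2 := by rw [huvcard]
    have ht1 : 1 ≤ t := by
      have := card_le_card huvsub
      rw [huvcard, hVHcard, ht] at this
      omega
    rw [hVHcard, ht] at h1
    omega
  -- EH partitions into the classes
  have hEHsum : EH.card = ∑ β ∈ Finset.Icc 1 k, (Cls β).card := by
    rw [← card_biUnion]
    · congr 1
      ext e
      simp only [hEH, hCls, mem_biUnion, mem_filter, mem_univ, true_and, Finset.mem_Icc]
      constructor
      · intro he
        have := hφ.1 e (Set.mem_univ _)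
        exact ⟨φ e, ⟨this.1, this.2⟩, he, rfl⟩
      · rintro ⟨β, -, he, -⟩; exact he
    · intro β _ γ _ hβγ
      rw [Function.onFun, Finset.disjoint_left]
      intro e he hf
      simp only [hCls, mem_filter] at he hf
      exact hβγ (he.2.2.symm.trans hf.2.2)
  -- |EH| = t * k
  have hEHtk : EH.card = t * k := by
    rw [hEHcard]
    rw [ht, Nat.add_sub_cancel] at hcount
    have h2 : 2 * t * k = 2 * (t * k) := by ring
    omega
  -- final contradiction
  have hαIcc : α ∈ Finset.Icc 1 k := by
    rw [Finset.mem_Icc]; exact ⟨hα.1, hα.2⟩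
  have hlt : ∑ β ∈ Finset.Icc 1 k, (Cls β).card < ∑ _β ∈ Finset.Icc 1 k, t :=
    Finset.sum_lt_sum (fun β _ => hclsle β) ⟨α, hαIcc, hclsalt⟩
  rw [Finset.sum_const, Nat.card_Icc, Nat.add_sub_cancel, smul_eq_mul] at hlt
  rw [hEHsum] at hEHtk
  have h3 : k * t = t * k := Nat.mul_comm k t
  omega

/-- **Lemma 2.2 (second part).** If `χ'(G) = k` and `H` is a `k`-dense subgraph of `G`, then
for every `k`-edge-coloring `φ` of `G`, the subgraph `H` is `φ_H`-elementary and strongly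
`φ`-closed. -/
theorem dense_subgraph_elementary_strongly_closed (G : Multigraph) (k : ℕ)
    (hk : G.chromIndex = k)
    (H : G.Subgraph) (hH : G.IsDense k H)
    (φ : G.E → ℕ) (hφ : G.IsProperColoring k φ) :
    G.IsElementaryOn k H.edges φ H.verts ∧ G.IsStronglyClosedOn Set.univ φ H.verts := by
  classical
  have key : ∀ α ∈ Set.Icc 1 k, ∀ u ∈ H.verts, ∀ v ∈ H.verts, u ≠ v →
      (∀ e ∈ H.edges, u ∈ G.ends e → φ e ≠ α) →
      (∀ e ∈ H.edges, v ∈ G.ends e → φ e ≠ α) → False := fun α hα u hu v hv huv hmu hmv =>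
    dense_key G k H hH φ hφ hα hu hv huv hmu hmv
  have noHedge : ∀ e ∈ G.boundary H.verts, ∀ a ∈ G.ends e, a ∈ H.verts →
      ∀ g ∈ H.edges, a ∈ G.ends g → φ g ≠ φ e := by
    intro e he a hae haH g hg hag hcol
    have hgne : g ≠ e := by
      rintro rfl
      obtain ⟨-, b, hb, hbH⟩ := he
      exact hbH (H.support g hg b hb)
    exact hφ.2 g (Set.mem_univ _) e (Set.mem_univ _) hgne ⟨a, hag, hae⟩ hcol
  refine ⟨?_, ?_, ?_⟩
  · intro u hu v hv huv
    ext i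
    simp only [Multigraph.missingOn, Set.mem_inter_iff, Set.mem_setOf_eq,
      Set.mem_empty_iff_false, iff_false]
    rintro ⟨⟨hik, hu'⟩, -, hv'⟩
    exact key i hik u hu v hv huv hu' hv'
  · rintro e ⟨hebd, -⟩ v hv
    obtain ⟨⟨a, hae, haH⟩, -⟩ := id hebd
    by_cases hva : v = a
    · exact ⟨e, Set.mem_univ _, hva ▸ hae, rfl⟩
    · by_contra hcon
      push_neg at hcon
      have hv' : ∀ g ∈ H.edges, v ∈ G.ends g → φ g ≠ φ e := fun g hg hvg h =>
        (hcon g (Set.mem_univ _) hvg) h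
      have ha' := noHedge e hebd a hae haH
      exact key (φ e) (hφ.1 e (Set.mem_univ _)) v hv a haH hva hv' ha'
  · rintro e ⟨hebd, -⟩ f ⟨hfbd, -⟩ hef hcol
    obtain ⟨⟨a, hae, haH⟩, -⟩ := id hebd
    obtain ⟨⟨b, hbf, hbH⟩, -⟩ := id hfbd
    by_cases hab : a = b
    · exact hφ.2 e (Set.mem_univ _) f (Set.mem_univ _) hef ⟨a, hae, hab ▸ hbf⟩ hcol
    · have ha' := noHedge e hebd a hae haH
      have hb' := noHedge f hfbd b hbf hbH
      exact key (φ e) (hφ.1 e (Set.mem_univ _)) a haH b hbH hab ha'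
        (fun g hg hbg h => hb' g hg hbg (h.trans hcol))
end

section
/- Let G be a multigraph, e an edge of G, and k ≥ Δ(G)+1 an integer. If e is a k-critical edge of G, then G−e has a k-dense subgraph H containing both endvertices of e such that e is also a k-critical edge of H+e. -/
namespace Multigraph

variable {G : Multigraph}

/-- Every edge set admits some proper coloring (with enough colors). -/
lemma exists_coloring (G : Multigraph) (D : Set G.E) :
    ∃ m c, G.IsProperColoringOn m D c := by
  classical
  refine ⟨Fintype.card G.E, fun e => (Fintype.equivFin G.E e).val + 1, ?_, ?_⟩
  · intro e _
    simp only [Set.mem_Icc]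
    have := (Fintype.equivFin G.E e).isLt
    omega
  · intro e _ f _ hef _ h
    simp only at h
    exact hef ((Fintype.equivFin G.E).injective (Fin.ext (by omega)))

lemma coloringSet_nonempty (G : Multigraph) (D : Set G.E) :
    {k | ∃ c, G.IsProperColoringOn k D c}.Nonempty := by
  obtain ⟨m, c, h⟩ := G.exists_coloring D
  exact ⟨m, c, h⟩

lemma exists_coloring_chromIndexOn (G : Multigraph) (D : Set G.E) :
    ∃ c, G.IsProperColoringOn (G.chromIndexOn D) D c :=
  Nat.sInf_mem (G.coloringSet_nonempty D)

lemma IsProperColoringOn.mono {k : ℕ} {D D' : Set G.E} {c : G.E → ℕ}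
    (h : G.IsProperColoringOn k D' c) (hDD : D ⊆ D') : G.IsProperColoringOn k D c :=
  ⟨fun e he => h.1 e (hDD he), fun e he f hf => h.2 e (hDD he) f (hDD hf)⟩

lemma chromIndexOn_le {k : ℕ} {D : Set G.E} {c : G.E → ℕ}
    (h : G.IsProperColoringOn k D c) : G.chromIndexOn D ≤ k :=
  Nat.sInf_le ⟨c, h⟩

/-- A color class within an odd vertex set covers at most `(|S|-1)/2` edges. -/
lemma matching_bound {S : Set G.V} (M : Finset G.E)
    (hM : ∀ e ∈ M, ∀ f ∈ M, e ≠ f → ∀ v, v ∈ G.ends e → v ∉ G.ends f)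
    (hS : ∀ e ∈ M, ∀ v ∈ G.ends e, v ∈ S) :
    2 * M.card ≤ S.ncard := by
  classical
  set te : G.E → Finset G.V := fun e => Finset.univ.filter (· ∈ G.ends e) with hte
  have hcard : ∀ e : G.E, (te e).card = 2 := by
    intro e
    obtain ⟨⟨a, b⟩, hab⟩ := Quot.exists_rep (G.ends e)
    have hends : G.ends e = s(a, b) := hab.symm
    have hne : a ≠ b := by
      intro h; exact G.loopless e (by rw [hends, h]; exact Sym2.mk_isDiag_iff.2 rfl)
    have : te e = {a, b} := by
      ext v; simp [hte, hends, Sym2.mem_iff]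
    rw [this, Finset.card_insert_of_notMem (by simp [hne]), Finset.card_singleton]
  have hdisj : ∀ e ∈ M, ∀ f ∈ M, e ≠ f → Disjoint (te e) (te f) := by
    intro e he f hf hef
    rw [Finset.disjoint_left]
    intro v hv hv'
    simp only [hte, Finset.mem_filter] at hv hv'
    exact hM e he f hf hef v hv.2 hv'.2
  have hbu : (M.biUnion te).card = 2 * M.card := by
    rw [Finset.card_biUnion hdisj]
    simp [hcard, Finset.sum_const, mul_comm]
  have hsub : M.biUnion te ⊆ S.toFinset := by
    intro v hv
    simp only [Finset.mem_biUnion, hte, Finset.mem_filter] at hv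
    obtain ⟨e, he, _, hv⟩ := hv
    exact Set.mem_toFinset.2 (hS e he v hv)
  calc 2 * M.card = (M.biUnion te).card := hbu.symm
    _ ≤ S.toFinset.card := Finset.card_le_card hsub
    _ = S.ncard := (Set.ncard_eq_toFinset_card' S).symm

/-- Counting bound: with `k` colors, an edge set inside an odd vertex set `S`
has at most `(|S|-1)k/2` edges. -/
lemma coloring_count_bound {k : ℕ} {D : Set G.E} {c : G.E → ℕ}
    (h : G.IsProperColoringOn k D c) {S : Set G.V}
    (hS : ∀ e ∈ D, ∀ v, v ∈ G.ends e → v ∈ S) (hodd : Odd S.ncard) :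
    2 * D.ncard ≤ (S.ncard - 1) * k := by
  classical
  set Df : Finset G.E := D.toFinset with hDf
  have hmemD : ∀ e, e ∈ Df ↔ e ∈ D := fun e => Set.mem_toFinset
  have hfib : Df.card = ∑ i ∈ Finset.Icc 1 k, (Df.filter (fun e => c e = i)).card := by
    apply Finset.card_eq_sum_card_fiberwise
    intro e he
    have := (h.1 e ((hmemD e).1 he))
    simpa [Finset.mem_Icc] using this
  have hbound : ∀ i, 2 * (Df.filter (fun e => c e = i)).card ≤ S.ncard - 1 := by
    intro i
    have hm : 2 * (Df.filter (fun e => c e = i)).card ≤ S.ncard := by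
      apply matching_bound
      · intro e he f hf hef v hve hvf
        simp only [Finset.mem_filter] at he hf
        exact h.2 e ((hmemD e).1 he.1) f ((hmemD f).1 hf.1) hef ⟨v, hve, hvf⟩
          (he.2.trans hf.2.symm)
      · intro e he v hv
        simp only [Finset.mem_filter] at he
        exact hS e ((hmemD e).1 he.1) v hv
    obtain ⟨m, hmm⟩ := hodd
    omega
  calc 2 * D.ncard = 2 * Df.card := by rw [Set.ncard_eq_toFinset_card' D]
    _ = ∑ i ∈ Finset.Icc 1 k, 2 * (Df.filter (fun e => c e = i)).card := by
        rw [hfib, Finset.mul_sum]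
    _ ≤ ∑ _i ∈ Finset.Icc 1 k, (S.ncard - 1) := Finset.sum_le_sum (fun i _ => hbound i)
    _ = (S.ncard - 1) * k := by simp [Finset.sum_const, Nat.card_Icc, mul_comm]

end Multigraph

/-- **Lemma 2.3.** (Assuming the Goldberg–Seymour theorem.) If `e` is a `k`-critical edge of
`G` and `k ≥ Δ(G)+1`, then `G-e` has a `k`-dense subgraph `H` containing both endvertices of
`e` such that `e` is also a `k`-critical edge of `H+e`. -/
theorem critical_edge_dense_subgraph (hGS : Multigraph.GoldbergSeymour)
    (G : Multigraph) (k : ℕ) (e : G.E)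
    (hk : G.maxDegree + 1 ≤ k) (he : G.IsCriticalEdge k e) :
    ∃ H : G.Subgraph, e ∉ H.edges ∧ (∀ v, v ∈ G.ends e → v ∈ H.verts) ∧
      G.IsDense k H ∧
      G.chromIndexOn H.edges = k ∧ G.chromIndexOn (insert e H.edges) = k + 1 := by
  classical
  obtain ⟨hGe, hGfull⟩ := he
  have hGS' := hGS G (by rw [hGfull]; omega)
  rw [hGfull] at hGS'
  -- the density exceeds k
  have hΓ : (k : ℝ) < G.density := by
    refine Int.lt_ceil.mp ?_
    have : ((k : ℕ) : ℤ) < ((k + 1 : ℕ) : ℤ) := by exact_mod_cast Nat.lt_succ_self k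
    omega
  -- extract a dense subgraph
  have hex : ∃ H' : G.Subgraph, 3 ≤ H'.verts.ncard ∧ Odd H'.verts.ncard ∧
      (k : ℝ) < 2 * (H'.edges.ncard : ℝ) / ((H'.verts.ncard : ℝ) - 1) := by
    by_contra hcon
    push_neg at hcon
    have hle : G.density ≤ (k : ℝ) := by
      apply Real.sSup_le
      · rintro x ⟨H', -, -, h3, ho, rfl⟩
        exact hcon H' h3 ho
      · exact_mod_cast Nat.zero_le k
    linarith
  obtain ⟨H', h3, hodd, hgt⟩ := hex
  have hodd' := hodd
  obtain ⟨m₀, hm₀⟩ := hodd'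
  have hn1 : (0 : ℝ) < (H'.verts.ncard : ℝ) - 1 := by
    have : (3 : ℝ) ≤ (H'.verts.ncard : ℝ) := by exact_mod_cast h3
    linarith
  have hlt : (H'.verts.ncard - 1) * k < 2 * H'.edges.ncard := by
    have h1 : (k : ℝ) * ((H'.verts.ncard : ℝ) - 1) < 2 * (H'.edges.ncard : ℝ) := (lt_div_iff₀ hn1).mp hgt
    have h2 : ((H'.verts.ncard : ℝ) - 1) = ((H'.verts.ncard - 1 : ℕ) : ℝ) := by
      rw [Nat.cast_sub (by omega : 1 ≤ H'.verts.ncard)]; norm_num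
    rw [h2] at h1
    have h3' : (((H'.verts.ncard - 1) * k : ℕ) : ℝ) < ((2 * H'.edges.ncard : ℕ) : ℝ) := by push_cast; linarith
    exact_mod_cast h3'
  -- a k-coloring of G - e
  obtain ⟨c₀, hc₀⟩ := G.exists_coloring_chromIndexOn {e}ᶜ
  rw [hGe] at hc₀
  have hsubdiff : H'.edges \ {e} ⊆ ({e}ᶜ : Set G.E) := fun f hf => hf.2
  have hbound : 2 * (H'.edges \ {e}).ncard ≤ (H'.verts.ncard - 1) * k := by
    refine Multigraph.coloring_count_bound (hc₀.mono hsubdiff) ?_ hodd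
    intro f hf v hv
    exact H'.support f hf.1 v hv
  have hemem : e ∈ H'.edges := by
    by_contra hne
    rw [Set.diff_singleton_eq_self hne] at hbound
    omega
  have hE'pos : 1 ≤ H'.edges.ncard := by
    have : 0 < H'.edges.ncard := (Set.ncard_pos (Set.toFinite _)).2 ⟨e, hemem⟩
    omega
  have hdiffcard : (H'.edges \ {e}).ncard = H'.edges.ncard - 1 :=
    Set.ncard_diff_singleton_of_mem hemem
  rw [hdiffcard] at hbound
  have hKeven : ∃ t, (H'.verts.ncard - 1) * k = 2 * t := ⟨m₀ * k, by rw [show H'.verts.ncard - 1 = 2 * m₀ by omega]; ring⟩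
  obtain ⟨t, ht⟩ := hKeven
  have hKeq : (H'.verts.ncard - 1) * k = 2 * (H'.edges.ncard - 1) := by omega
  refine ⟨⟨H'.verts, H'.edges \ {e}, fun f hf v hv => H'.support f hf.1 v hv⟩,
    fun h => h.2 rfl, fun v hv => H'.support e hemem v hv, ⟨hodd, ?_⟩, ?_, ?_⟩
  · simp only [hdiffcard]
    omega
  · -- chromatic index of H is k
    apply le_antisymm
    · exact Multigraph.chromIndexOn_le (hc₀.mono hsubdiff)
    · obtain ⟨c₁, hc₁⟩ := G.exists_coloring_chromIndexOn (H'.edges \ {e})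
      have hb := Multigraph.coloring_count_bound hc₁
        (fun f hf v hv => H'.support f hf.1 v hv) hodd
      rw [hdiffcard] at hb
      have h2 : (H'.verts.ncard - 1) * k ≤ (H'.verts.ncard - 1) * G.chromIndexOn (H'.edges \ {e}) := by omega
      exact Nat.le_of_mul_le_mul_left h2 (by omega)
  · -- chromatic index of H + e is k + 1
    have hins : insert e (H'.edges \ {e}) = H'.edges :=
      Set.insert_diff_singleton.trans (Set.insert_eq_self.2 hemem)
    simp only [hins]
    apply le_antisymm
    · obtain ⟨cF, hcF⟩ := G.exists_coloring_chromIndexOn Set.univ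
      have : G.chromIndexOn Set.univ = k + 1 := hGfull
      rw [this] at hcF
      exact Multigraph.chromIndexOn_le (hcF.mono (Set.subset_univ _))
    · obtain ⟨c₂, hc₂⟩ := G.exists_coloring_chromIndexOn H'.edges
      have hb := Multigraph.coloring_count_bound hc₂
        (fun f hf v hv => H'.support f hf v hv) hodd
      have h2 : (H'.verts.ncard - 1) * k < (H'.verts.ncard - 1) * G.chromIndexOn H'.edges := by omega
      have := Nat.lt_of_mul_lt_mul_left h2
      omega
end

section
/- Let G be a multigraph with χ'(G) = k+1 ≥ Δ(G)+2, let e be a k-critical edge of G, and let H be the unique maximal k-dense subgraph of G−e containing both endvertices of e. Then for every k-edge-coloring φ of G−e, the subgraph H is φ_H-elementary and strongly φ-closed. -/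
/-- **Lemma 2.4(b).** (Assuming the Goldberg–Seymour theorem.) Let `χ'(G) = k+1 ≥ Δ(G)+2`,
let `e` be a `k`-critical edge of `G`, and let `H` be the (unique) maximal `k`-dense subgraph
of `G-e` containing both endvertices of `e`. Then for every `k`-edge-coloring `φ` of `G-e`,
the subgraph `H` is `φ_H`-elementary and strongly `φ`-closed. -/
theorem maximal_dense_elementary_strongly_closed (hGS : Multigraph.GoldbergSeymour)
    (G : Multigraph) (k : ℕ)
    (hχ : G.chromIndex = k + 1) (hΔ : G.maxDegree + 2 ≤ k + 1)
    (e : G.E) (he : G.IsCriticalEdge k e)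
    (H : G.Subgraph) (hH : G.IsMaximalDenseIn {e} k H)
    (hVe : ∀ v, v ∈ G.ends e → v ∈ H.verts)
    (φ : G.E → ℕ) (hφ : G.IsProperColoringOn k {e}ᶜ φ) :
    G.IsElementaryOn k H.edges φ H.verts ∧ G.IsStronglyClosedOn {e}ᶜ φ H.verts := by

  classical
  obtain ⟨⟨hHe, hodd, hcount⟩, -⟩ := hH
  have hHsub : H.edges ⊆ ({e}ᶜ : Set G.E) := by
    intro f hf hfe
    have : f ∈ H.edges ∩ {e} := ⟨hf, hfe⟩
    rw [hHe] at this
    exact this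
  obtain ⟨m, hm⟩ := hodd
  -- color classes inside H and the vertices they cover
  set M : ℕ → Set G.E := fun i => {f | f ∈ H.edges ∧ φ f = i} with hMdef
  set C : ℕ → Set G.V := fun i => {v | ∃ f, f ∈ M i ∧ v ∈ G.ends f} with hCdef
  have hproper := hφ.2
  -- the two endpoints of an edge
  have hends : ∀ f : G.E, ∃ a b : G.V, a ≠ b ∧ G.ends f = s(a, b) := by
    intro f
    obtain ⟨⟨a, b⟩, hab⟩ := (G.ends f).exists_rep
    refine ⟨a, b, ?_, hab.symm⟩
    intro h
    exact G.loopless f (by rw [← hab, h]; exact Sym2.mk_isDiag_iff.2 rfl)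
  have hends2 : ∀ f : G.E, ({v | v ∈ G.ends f} : Set G.V).ncard = 2 := by
    intro f
    obtain ⟨a, b, hab, h⟩ := hends f
    have : ({v | v ∈ G.ends f} : Set G.V) = {a, b} := by
      ext v; simp [h, Sym2.mem_iff]
    rw [this]
    exact Set.ncard_pair hab
  -- disjointness of endpoint sets of same-colored edges in H
  have hdisj : ∀ i, ∀ f ∈ M i, ∀ g ∈ M i, f ≠ g →
      ({v | v ∈ G.ends f} : Set G.V) ∩ {v | v ∈ G.ends g} = ∅ := by
    intro i f hf g hg hfg
    by_contra hne
    obtain ⟨v, hvf, hvg⟩ := Set.nonempty_iff_ne_empty.2 hne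
    exact hproper f (hHsub hf.1) g (hHsub hg.1) hfg ⟨v, hvf, hvg⟩ (hf.2.trans hg.2.symm)
  -- |C i| = 2 |M i|
  have hCcard : ∀ i, (C i).ncard = 2 * (M i).ncard := by
    intro i
    have hC_eq : (C i).toFinset = (M i).toFinset.biUnion
        (fun f => ({v | v ∈ G.ends f} : Set G.V).toFinset) := by
      ext v
      simp only [Set.mem_toFinset, Finset.mem_biUnion]
      constructor
      · rintro ⟨f, hf, hv⟩
        exact ⟨f, by simpa using hf, by simpa using hv⟩
      · rintro ⟨f, hf, hv⟩
        exact ⟨f, by simpa using hf, by simpa using hv⟩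
    have hdisj' : ∀ f ∈ (M i).toFinset, ∀ g ∈ (M i).toFinset, f ≠ g →
        Disjoint (({v | v ∈ G.ends f} : Set G.V).toFinset)
          (({v | v ∈ G.ends g} : Set G.V).toFinset) := by
      intro f hf g hg hfg
      rw [Finset.disjoint_left]
      intro v hvf hvg
      have := hdisj i f (by simpa using hf) g (by simpa using hg) hfg
      have : v ∈ ({v | v ∈ G.ends f} : Set G.V) ∩ {v | v ∈ G.ends g} :=
        ⟨by simpa using hvf, by simpa using hvg⟩
      rw [hdisj i f (by simpa using hf) g (by simpa using hg) hfg] at this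
      exact this
    rw [Set.ncard_eq_toFinset_card' (C i), hC_eq, Finset.card_biUnion hdisj']
    have : ∀ f ∈ (M i).toFinset, ({v | v ∈ G.ends f} : Set G.V).toFinset.card = 2 := by
      intro f _
      rw [← Set.ncard_eq_toFinset_card']
      exact hends2 f
    rw [Finset.sum_congr rfl this, Finset.sum_const, smul_eq_mul,
      ← Set.ncard_eq_toFinset_card' (M i), Nat.mul_comm]
  -- C i ⊆ H.verts
  have hCsub : ∀ i, C i ⊆ H.verts := by
    rintro i v ⟨f, hf, hv⟩
    exact H.support f hf.1 v hv
  -- |M i| ≤ m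
  have hMle : ∀ i, (M i).ncard ≤ m := by
    intro i
    have h1 : (C i).ncard ≤ H.verts.ncard := Set.ncard_le_ncard (hCsub i) (Set.toFinite _)
    rw [hCcard i] at h1
    omega
  -- H.edges is the disjoint union of the M i
  have hE_eq : H.edges.toFinset = (Finset.Icc 1 k).biUnion (fun i => (M i).toFinset) := by
    ext f
    simp only [Set.mem_toFinset, Finset.mem_biUnion, Finset.mem_Icc]
    constructor
    · intro hf
      have hc := hφ.1 f (hHsub hf)
      refine ⟨φ f, ⟨hc.1, hc.2⟩, ?_⟩
      simp only [hMdef, Set.mem_toFinset, Set.mem_setOf_eq]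
      exact ⟨hf, trivial⟩
    · rintro ⟨i, _, hf⟩
      exact (by simpa using hf : f ∈ M i).1
  have hEsum : H.edges.ncard = ∑ i ∈ Finset.Icc 1 k, (M i).ncard := by
    rw [Set.ncard_eq_toFinset_card' H.edges, hE_eq]
    rw [Finset.card_biUnion]
    · exact Finset.sum_congr rfl fun i _ => (Set.ncard_eq_toFinset_card' (M i)).symm
    · intro i hi j hj hij
      rw [Function.onFun, Finset.disjoint_left]
      intro f hf hg
      have h1 : φ f = i := (by simpa using hf : f ∈ M i).2
      have h2 : φ f = j := (by simpa using hg : f ∈ M j).2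
      exact hij (h1.symm.trans h2)
  -- each color class has exactly m edges
  have hEcard : H.edges.ncard = m * k := by
    have h1 : H.verts.ncard - 1 = 2 * m := by omega
    have h2 : 2 * H.edges.ncard = 2 * (m * k) := by rw [hcount, h1]; ring
    omega
  have hMeq : ∀ i ∈ Finset.Icc 1 k, (M i).ncard = m := by
    by_contra hcon
    push_neg at hcon
    obtain ⟨i0, hi0, hne⟩ := hcon
    have hlt : (M i0).ncard < m := lt_of_le_of_ne (hMle i0) hne
    have : ∑ i ∈ Finset.Icc 1 k, (M i).ncard < ∑ i ∈ Finset.Icc 1 k, m :=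
      Finset.sum_lt_sum (fun i _ => hMle i) ⟨i0, hi0, hlt⟩
    rw [Finset.sum_const, Nat.card_Icc, smul_eq_mul] at this
    have h3 : (k + 1 - 1) * m = m * k := by rw [Nat.add_sub_cancel]; ring
    omega
  -- for each color there is a unique vertex of H missed by that color (inside H)
  have hKey : ∀ i ∈ Finset.Icc 1 k, ∃ w, H.verts \ C i = {w} := by
    intro i hi
    rw [← Set.ncard_eq_one]
    rw [Set.ncard_diff (hCsub i) (Set.toFinite _), hCcard i, hMeq i hi]
    omega
  -- characterization: v ∉ C i ↔ no H-edge at v colored i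
  have hnotC : ∀ i v, v ∉ C i ↔ ∀ f ∈ H.edges, v ∈ G.ends f → φ f ≠ i := by
    intro i v
    simp only [hCdef, Set.mem_setOf_eq, not_exists, not_and, hMdef]
    constructor
    · intro h f hf hv hfi
      exact h f ⟨hf, hfi⟩ hv
    · rintro h f ⟨hf, hfi⟩ hv
      exact h f hf hv hfi
  constructor
  · -- elementary
    intro u hu v hv huv
    by_contra hne
    obtain ⟨i, hiu, hiv⟩ := Set.nonempty_iff_ne_empty.2 hne
    obtain ⟨hik, hu'⟩ := hiu
    obtain ⟨-, hv'⟩ := hiv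
    have hik' : i ∈ Finset.Icc 1 k := by simpa [Finset.mem_Icc] using hik
    obtain ⟨w, hw⟩ := hKey i hik'
    have h1 : u ∈ H.verts \ C i := ⟨hu, (hnotC i u).2 hu'⟩
    have h2 : v ∈ H.verts \ C i := ⟨hv, (hnotC i v).2 hv'⟩
    rw [hw] at h1 h2
    exact huv (h1.trans h2.symm)
  · -- strongly closed
    -- the H-endpoint of a boundary edge colored i is the unique i-missing vertex
    have hbd : ∀ f ∈ G.boundary H.verts ∩ ({e}ᶜ : Set G.E), ∀ u, u ∈ G.ends f → u ∈ H.verts →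
        u ∈ H.verts \ C (φ f) := by
      rintro f ⟨hfb, hfe⟩ u hu huH
      have hfnH : f ∉ H.edges := by
        intro hf
        obtain ⟨-, w, hw1, hw2⟩ := hfb
        exact hw2 (H.support f hf w hw1)
      refine ⟨huH, (hnotC (φ f) u).2 ?_⟩
      intro g hg hug hgi
      exact hproper g (hHsub hg) f hfe (fun h => hfnH (h ▸ hg)) ⟨u, hug, hu⟩ hgi
    constructor
    · rintro f hf v hv
      obtain ⟨u, hu1, hu2⟩ := hf.1.1
      have hfe := hf.2
      have hik : φ f ∈ Finset.Icc 1 k := by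
        have := hφ.1 f hf.2
        simpa [Finset.mem_Icc] using this
      obtain ⟨w, hw⟩ := hKey (φ f) hik
      by_cases hvC : v ∈ C (φ f)
      · obtain ⟨g, hg, hvg⟩ := hvC
        exact ⟨g, hHsub hg.1, hvg, hg.2⟩
      · have h1 : v ∈ H.verts \ C (φ f) := ⟨hv, hvC⟩
        have h2 := hbd f hf u hu1 hu2
        rw [hw, Set.mem_singleton_iff] at h1 h2
        have hvu : v = u := by rw [h1, h2]
        exact ⟨f, hfe, hvu ▸ hu1, rfl⟩
    · rintro f hf g hg hfg heq
      obtain ⟨u, hu1, hu2⟩ := hf.1.1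
      obtain ⟨u', hu1', hu2'⟩ := hg.1.1
      have hik : φ f ∈ Finset.Icc 1 k := by
        have := hφ.1 f hf.2
        simpa [Finset.mem_Icc] using this
      obtain ⟨w, hw⟩ := hKey (φ f) hik
      have h1 := hbd f hf u hu1 hu2
      have h2 := hbd g hg u' hu1' hu2'
      rw [← heq] at h2
      rw [hw] at h1 h2
      have huu : u = u' := h1.trans h2.symm
      exact hproper f hf.2 g hg.2 hfg ⟨u, hu1, huu ▸ hu1'⟩ heq
end

section
/- Let G be a multigraph with χ'(G) = k ≥ Δ(G) and let H be a k-dense subgraph of G. Let ψ be a k-edge-coloring of H and φ a k-edge-coloring of G−E(H) such that the colors on the edges of the boundary ∂_G(H) are pairwise distinct under φ. Then by renaming the color classes of ψ on E(H), one can obtain a proper k-edge-coloring of G that agrees with φ on E(G)∖E(H) and whose restriction to E(H) is the modified coloring based on ψ. -/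
section Helpers

open Multigraph

private lemma perm_extend_aux (k : ℕ) (B : Finset ℕ) (f : ℕ → ℕ) :
    ∀ (_ : ∀ b ∈ B, b ∈ Set.Icc 1 k) (_ : Set.InjOn f B)
      (_ : ∀ b ∈ B, f b ∈ Set.Icc 1 k),
    ∃ π : Equiv.Perm ℕ, (∀ i ∈ Set.Icc 1 k, π i ∈ Set.Icc 1 k) ∧
      (∀ i ∈ Set.Icc 1 k, π.symm i ∈ Set.Icc 1 k) ∧ ∀ b ∈ B, π (f b) = b := by
  classical
  induction B using Finset.induction_on with
  | empty => exact fun _ _ _ => ⟨1, by simp, fun i hi => hi, by simp⟩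
  | @insert b B hbB ih =>
    intro hB hinj hfr
    obtain ⟨π, hπ1, hπ2, hπ3⟩ := ih (fun x hx => hB x (Finset.mem_insert_of_mem hx))
      (hinj.mono (by simp only [Finset.coe_insert]; exact Set.subset_insert _ _))
      (fun x hx => hfr x (Finset.mem_insert_of_mem hx))
    have hbIcc : b ∈ Set.Icc 1 k := hB b (Finset.mem_insert_self b B)
    have hfbIcc : f b ∈ Set.Icc 1 k := hfr b (Finset.mem_insert_self b B)
    have hsb : π.symm b ∈ Set.Icc 1 k := hπ2 b hbIcc
    refine ⟨(Equiv.swap (f b) (π.symm b)).trans π, ?_, ?_, ?_⟩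
    · intro i hi
      rcases eq_or_ne i (f b) with rfl | h1
      · simpa using hπ1 _ hsb
      rcases eq_or_ne i (π.symm b) with rfl | h2
      · simpa [Equiv.swap_apply_right] using hπ1 _ hfbIcc
      · simpa [Equiv.swap_apply_of_ne_of_ne h1 h2] using hπ1 i hi
    · intro i hi
      simp only [Equiv.symm_trans_apply, Equiv.symm_swap]
      have := hπ2 i hi
      rcases eq_or_ne (π.symm i) (f b) with h | h1
      · rw [h, Equiv.swap_apply_left]; exact hsb
      rcases eq_or_ne (π.symm i) (π.symm b) with h | h2
      · rw [h, Equiv.swap_apply_right]; exact hfbIcc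
      · rw [Equiv.swap_apply_of_ne_of_ne h1 h2]; exact this
    · intro b' hb'
      rcases Finset.mem_insert.1 hb' with rfl | hb'B
      · simp [Equiv.swap_apply_left]
      · have h1 : f b' ≠ f b := fun h => hbB (by
          have := hinj (by simp [hb'B]) (by simp) h
          rwa [this] at hb'B)
        have h2 : f b' ≠ π.symm b := by
          intro h
          have : π (f b') = b := by rw [h]; simp
          rw [hπ3 b' hb'B] at this
          subst this
          exact hbB hb'B
        simp only [Equiv.trans_apply, Equiv.swap_apply_of_ne_of_ne h1 h2]
        exact hπ3 b' hb'B

private lemma sym2_exists {α : Type*} (z : Sym2 α) : ∃ a b, z = s(a, b) := by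
  induction z using Sym2.ind with
  | _ a b => exact ⟨a, b, rfl⟩

private lemma ends_ncard (G : Multigraph) (e : G.E) : {v | v ∈ G.ends e}.ncard = 2 := by
  obtain ⟨a, b, hab⟩ := sym2_exists (G.ends e)
  have hne : a ≠ b := by
    intro h
    exact G.loopless e (by rw [hab, h]; exact Sym2.mk_isDiag_iff.2 rfl)
  have : {v | v ∈ G.ends e} = {a, b} := by
    ext v; simp [hab, Sym2.mem_iff]
  rw [this, Set.ncard_pair hne]

private lemma cover_ncard (G : Multigraph) (M : Set G.E)
    (hM : ∀ e ∈ M, ∀ f ∈ M, e ≠ f → ¬∃ v, v ∈ G.ends e ∧ v ∈ G.ends f) :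
    {v | ∃ e ∈ M, v ∈ G.ends e}.ncard = 2 * M.ncard := by
  classical
  have hMfin : M.Finite := Set.toFinite M
  have hcov : {v | ∃ e ∈ M, v ∈ G.ends e} =
      ↑(hMfin.toFinset.biUnion fun e => (Set.toFinite {v | v ∈ G.ends e}).toFinset) := by
    ext v
    simp only [Finset.coe_biUnion, Set.Finite.coe_toFinset, Set.mem_iUnion,
      Set.mem_setOf_eq]
    constructor
    · rintro ⟨e, he, hv⟩; exact ⟨e, he, hv⟩
    · rintro ⟨e, he, hv⟩; exact ⟨e, he, hv⟩
  rw [hcov, Set.ncard_coe_finset, Finset.card_biUnion, Set.ncard_eq_toFinset_card _ hMfin]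
  · rw [Finset.sum_congr rfl (fun e _ => ?_), Finset.sum_const, smul_eq_mul, Nat.mul_comm]
    rw [← Set.ncard_eq_toFinset_card _ (Set.toFinite _), ends_ncard]
  · intro x hx y hy hxy
    rw [Finset.mem_coe, Set.Finite.mem_toFinset] at hx hy
    rw [Function.onFun, Finset.disjoint_left]
    intro v hv hv'
    rw [Set.Finite.mem_toFinset] at hv hv'
    exact hM x hx y hy hxy ⟨v, hv, hv'⟩

private lemma matching_bound (G : Multigraph) (M : Set G.E) (X : Set G.V) (m : ℕ)
    (hX : X.ncard = 2 * m + 1)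
    (hM : ∀ e ∈ M, ∀ f ∈ M, e ≠ f → ¬∃ v, v ∈ G.ends e ∧ v ∈ G.ends f)
    (hsub : ∀ e ∈ M, ∀ v ∈ G.ends e, v ∈ X) : M.ncard ≤ m := by
  have h1 := cover_ncard G M hM
  have h2 : {v | ∃ e ∈ M, v ∈ G.ends e} ⊆ X := by
    rintro v ⟨e, he, hv⟩; exact hsub e he v hv
  have h3 := Set.ncard_le_ncard h2 (Set.toFinite X)
  omega

private lemma ncard_fiberwise (G : Multigraph) (D : Set G.E) (c : G.E → ℕ) (k : ℕ)
    (h : ∀ e ∈ D, c e ∈ Set.Icc 1 k) :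
    D.ncard = ∑ i ∈ Finset.Icc 1 k, {e | e ∈ D ∧ c e = i}.ncard := by
  classical
  have hfin : D.Finite := Set.toFinite D
  rw [Set.ncard_eq_toFinset_card _ hfin,
    Finset.card_eq_sum_card_fiberwise (f := c) (t := Finset.Icc 1 k)
      (fun x hx => by
        have := h x (hfin.mem_toFinset.1 hx)
        simpa [Finset.mem_Icc] using this)]
  refine Finset.sum_congr rfl fun i _ => ?_
  rw [Set.ncard_eq_toFinset_card _ (Set.toFinite _)]
  congr 1
  ext e
  simp [Set.Finite.mem_toFinset, Set.mem_setOf_eq]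

end Helpers

/-- **Lemma 2.5(a).** Let `χ'(G) = k ≥ Δ(G)` and let `H` be a `k`-dense subgraph of `G`.
Let `ψ` be a `k`-edge-coloring of `H` and `φ` a `k`-edge-coloring of `G - E(H)` such that the
colors on the edges of `∂_G(H)` are pairwise distinct under `φ`. Then by renaming the color
classes of `ψ` on `E(H)` (i.e. applying a permutation of the palette), one obtains a proper
`k`-edge-coloring of `G` agreeing with `φ` off `E(H)`. -/
theorem combine_colorings (G : Multigraph) (k : ℕ)
    (hχ : G.chromIndex = k) (hΔ : G.maxDegree ≤ k)
    (H : G.Subgraph) (hH : G.IsDense k H)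
    (ψ φ : G.E → ℕ)
    (hψ : G.IsProperColoringOn k H.edges ψ)
    (hφ : G.IsProperColoringOn k H.edgesᶜ φ)
    (hb : ∀ e ∈ G.boundary H.verts, ∀ f ∈ G.boundary H.verts, e ≠ f → φ e ≠ φ f) :
    ∃ (π : Equiv.Perm ℕ) (c : G.E → ℕ),
      (∀ i ∈ Set.Icc 1 k, π i ∈ Set.Icc 1 k) ∧
      (∀ e ∈ H.edges, c e = π (ψ e)) ∧
      (∀ e ∉ H.edges, c e = φ e) ∧
      G.IsProperColoring k c := by
  classical
  obtain ⟨hodd, hcard⟩ := hH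
  set X := H.verts with hXdef
  obtain ⟨m, hm⟩ := hodd
  have hm' : X.ncard = 2 * m + 1 := by omega
  have hEH : H.edges.ncard = m * k := by
    have h1 : X.ncard - 1 = 2 * m := by omega
    rw [h1] at hcard
    have h2 : 2 * m * k = 2 * (m * k) := by ring
    rw [h2] at hcard
    exact Nat.eq_of_mul_eq_mul_left (by norm_num) hcard
  -- Step A : a global proper k-coloring exists
  have hnonempty : ∃ c, G.IsProperColoringOn (Fintype.card G.E) Set.univ c := by
    refine ⟨fun e => (Fintype.equivFin G.E e : ℕ) + 1,
      fun e _ => ⟨Nat.le_add_left 1 _, Nat.succ_le_of_lt (Fintype.equivFin G.E e).2⟩, ?_⟩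
    intro e _ f _ hef _ h
    simp only [Nat.add_right_cancel_iff, Fin.val_inj] at h
    exact hef ((Fintype.equivFin G.E).injective h)
  obtain ⟨c₀, hc₀⟩ : ∃ c₀, G.IsProperColoringOn k Set.univ c₀ := by
    have : k ∈ {j | ∃ c, G.IsProperColoringOn j Set.univ c} := by
      rw [← hχ]
      exact Nat.sInf_mem ⟨_, hnonempty⟩
    exact this
  -- Step B : H.edges is the set of all edges inside X
  set D := {e : G.E | ∀ v ∈ G.ends e, v ∈ X} with hDdef
  have hHD : H.edges ⊆ D := fun e he v hv => H.support e he v hv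
  have hIccCard : ∀ n : ℕ, (∑ _i ∈ Finset.Icc 1 k, n) = k * n := by
    intro n
    rw [Finset.sum_const, smul_eq_mul, Nat.card_Icc, Nat.add_sub_cancel]
  have hDcard : D.ncard ≤ m * k := by
    rw [ncard_fiberwise G D c₀ k (fun e _ => hc₀.1 e (Set.mem_univ e))]
    calc ∑ i ∈ Finset.Icc 1 k, {e | e ∈ D ∧ c₀ e = i}.ncard
        ≤ ∑ _i ∈ Finset.Icc 1 k, m := by
          refine Finset.sum_le_sum fun i _ => ?_
          refine matching_bound G _ X m hm' ?_ ?_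
          · rintro e ⟨_, he⟩ f ⟨_, hf⟩ hef hv
            exact hc₀.2 e (Set.mem_univ e) f (Set.mem_univ f) hef hv (he.trans hf.symm)
          · rintro e ⟨heD, _⟩ v hv
            exact heD v hv
      _ = m * k := by rw [hIccCard, Nat.mul_comm]
  have hDE : H.edges = D :=
    Set.eq_of_subset_of_ncard_le hHD (by rw [hEH]; exact hDcard) (Set.toFinite D)
  have hbd_not : ∀ e ∈ G.boundary X, e ∉ H.edges := by
    rintro e ⟨_, w, hw, hwX⟩ he
    exact hwX (H.support e he w hw)
  have hbdry : ∀ e, e ∉ H.edges → ∀ v ∈ G.ends e, v ∈ X → e ∈ G.boundary X := by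
    intro e he v hv hvX
    refine ⟨⟨v, hv, hvX⟩, ?_⟩
    by_contra h
    push_neg at h
    exact he (hDE ▸ (fun w hw => h w hw))
  -- Step C : the colour classes of ψ are near-perfect matchings of X
  set C : ℕ → Set G.E := fun i => {e | e ∈ H.edges ∧ ψ e = i} with hCdef
  have hCmatch : ∀ i, ∀ e ∈ C i, ∀ f ∈ C i, e ≠ f → ¬∃ v, v ∈ G.ends e ∧ v ∈ G.ends f := by
    rintro i e ⟨heH, he⟩ f ⟨hfH, hf⟩ hef hv
    exact hψ.2 e heH f hfH hef hv (he.trans hf.symm)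
  have hCsub : ∀ i, ∀ e ∈ C i, ∀ v ∈ G.ends e, v ∈ X := by
    rintro i e ⟨heH, _⟩ v hv
    exact H.support e heH v hv
  have hCle : ∀ i, (C i).ncard ≤ m := fun i => matching_bound G _ X m hm' (hCmatch i) (hCsub i)
  have hCsum : ∑ i ∈ Finset.Icc 1 k, (C i).ncard = m * k := by
    rw [← hEH]
    exact (ncard_fiberwise G H.edges ψ k hψ.1).symm
  have hCeq : ∀ i ∈ Finset.Icc 1 k, (C i).ncard = m := by
    by_contra h
    push_neg at h
    obtain ⟨i₀, hi₀, hne⟩ := h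
    have hlt := Finset.sum_lt_sum (fun i _ => hCle i)
      ⟨i₀, hi₀, lt_of_le_of_ne (hCle i₀) hne⟩
    rw [hCsum, hIccCard, Nat.mul_comm] at hlt
    exact lt_irrefl _ hlt
  have hcover1 : ∀ i ∈ Finset.Icc 1 k,
      (X \ {v | ∃ e ∈ C i, v ∈ G.ends e}).ncard = 1 := by
    intro i hi
    have hcc := cover_ncard G (C i) (hCmatch i)
    rw [hCeq i hi] at hcc
    have hsub : {v | ∃ e ∈ C i, v ∈ G.ends e} ⊆ X := by
      rintro v ⟨e, he, hv⟩
      exact hCsub i e he v hv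
    rw [Set.ncard_diff hsub, hcc, hm']
    omega
  -- elementarity of X
  have helem : ∀ u ∈ X, ∀ v ∈ X, u ≠ v → ∀ i,
      i ∈ G.missingOn k H.edges ψ u → i ∈ G.missingOn k H.edges ψ v → False := by
    rintro u hu v hv huv i ⟨hiIcc, hiu⟩ ⟨_, hiv⟩
    have hiI : i ∈ Finset.Icc 1 k := by
      simpa [Finset.mem_Icc, Set.mem_Icc] using hiIcc
    have h2 : ({u, v} : Set G.V) ⊆ X \ {w | ∃ e ∈ C i, w ∈ G.ends e} := by
      rintro w (rfl | rfl)
      · exact ⟨hu, by rintro ⟨e, ⟨heH, hei⟩, hwe⟩; exact hiu e heH hwe hei⟩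
      · exact ⟨hv, by rintro ⟨e, ⟨heH, hei⟩, hwe⟩; exact hiv e heH hwe hei⟩
    have h3 := Set.ncard_le_ncard h2 (Set.toFinite _)
    rw [hcover1 i hiI, Set.ncard_pair huv] at h3
    omega
  -- Step D : per-vertex counting
  have hdeg : ∀ v : G.V, G.degree v ≤ k := fun v =>
    le_trans (le_csSup ((Set.finite_range _).bddAbove) ⟨v, rfl⟩) hΔ
  set Av : G.V → Set G.E := fun v => {e | e ∈ H.edges ∧ v ∈ G.ends e} with hAvdef
  set bdv : G.V → Set G.E := fun v => {e | e ∉ H.edges ∧ v ∈ G.ends e} with hbdvdef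
  have hMv : ∀ v, G.missingOn k H.edges ψ v = Set.Icc 1 k \ (ψ '' Av v) := by
    intro v
    ext i
    simp only [Multigraph.missingOn, Set.mem_setOf_eq, Set.mem_diff, Set.mem_image, hAvdef]
    constructor
    · rintro ⟨h1, h2⟩
      exact ⟨h1, by rintro ⟨e, ⟨heH, hev⟩, hei⟩; exact h2 e heH hev hei⟩
    · rintro ⟨h1, h2⟩
      exact ⟨h1, fun e heH hev hei => h2 ⟨e, ⟨heH, hev⟩, hei⟩⟩
  have hIccN : (Set.Icc 1 k).ncard = k := by
    rw [← Finset.coe_Icc, Set.ncard_coe_finset, Nat.card_Icc]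
    omega
  have hMvcard : ∀ v, (G.missingOn k H.edges ψ v).ncard = k - (Av v).ncard := by
    intro v
    have hinj : Set.InjOn ψ (Av v) := by
      rintro e ⟨heH, hev⟩ f ⟨hfH, hfv⟩ hef
      by_contra hne
      exact hψ.2 e heH f hfH hne ⟨v, hev, hfv⟩ hef
    have hsub : ψ '' Av v ⊆ Set.Icc 1 k := by
      rintro i ⟨e, ⟨heH, _⟩, rfl⟩
      exact hψ.1 e heH
    rw [hMv, Set.ncard_diff hsub, hIccN,
      Set.ncard_image_of_injOn hinj]
  have hbdvcard : ∀ v, (bdv v).ncard ≤ k - (Av v).ncard := by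
    intro v
    have hsplit : {e : G.E | v ∈ G.ends e} = Av v ∪ bdv v := by
      ext e
      by_cases heH : e ∈ H.edges <;> simp [hAvdef, hbdvdef, heH]
    have hdisj : Disjoint (Av v) (bdv v) := by
      rw [Set.disjoint_left]
      rintro e ⟨h1, _⟩ ⟨h2, _⟩
      exact h2 h1
    have hdv : G.degree v = (Av v).ncard + (bdv v).ncard := by
      rw [Multigraph.degree, hsplit,
        Set.ncard_union_eq hdisj (Set.toFinite _) (Set.toFinite _)]
    have := hdeg v
    omega
  -- injections from boundary edges at v into missing colours at v
  have hchoice : ∀ v : G.V, ∃ g : G.E → ℕ, Set.InjOn g (bdv v) ∧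
      ∀ e ∈ bdv v, g e ∈ G.missingOn k H.edges ψ v := by
    intro v
    have hfinM : (G.missingOn k H.edges ψ v).Finite :=
      (Set.finite_Icc 1 k).subset (by rw [hMv]; exact Set.diff_subset)
    haveI := (Set.toFinite (bdv v)).fintype
    haveI := hfinM.fintype
    have hle : Fintype.card (bdv v) ≤ Fintype.card (G.missingOn k H.edges ψ v) := by
      rw [← Set.toFinset_card, ← Set.ncard_eq_toFinset_card',
        ← Set.toFinset_card, ← Set.ncard_eq_toFinset_card', hMvcard]
      exact hbdvcard v
    obtain ⟨ι⟩ := Function.Embedding.nonempty_of_card_le hle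
    refine ⟨fun e => if h : e ∈ bdv v then (ι ⟨e, h⟩ : ℕ) else 0, ?_, ?_⟩
    · intro e he f hf hef
      simp only [dif_pos he, dif_pos hf] at hef
      have h2 : (⟨e, he⟩ : bdv v) = ⟨f, hf⟩ := ι.injective (Subtype.coe_injective hef)
      exact congrArg Subtype.val h2
    · intro e he
      simp only [dif_pos he]
      exact (ι ⟨e, he⟩).2
  choose g hg1 hg2 using hchoice
  -- choose the endvertex of each boundary edge inside X
  have hvtx' : ∀ e : G.E, ∃ v, v ∈ G.ends e ∧ (e ∈ G.boundary X → v ∈ X) := by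
    intro e
    by_cases h : e ∈ G.boundary X
    · obtain ⟨⟨v, hv1, hv2⟩, _⟩ := h
      exact ⟨v, hv1, fun _ => hv2⟩
    · obtain ⟨a, b, hab⟩ := sym2_exists (G.ends e)
      exact ⟨a, by rw [hab]; exact Sym2.mem_mk_left a b, fun h' => absurd h' h⟩
  choose vtx hvtx1 hvtx2 using hvtx'
  have huniq : ∀ e ∈ G.boundary X, ∀ v ∈ G.ends e, v ∈ X → v = vtx e := by
    intro e he v hv hvX
    obtain ⟨a, b, hab⟩ := sym2_exists (G.ends e)
    have h1 := hvtx1 e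
    have h2 := hvtx2 e he
    obtain ⟨_, w, hw, hwX⟩ := he
    rw [hab, Sym2.mem_iff] at hv hw h1
    rcases hw with rfl | rfl
    · rcases hv with rfl | rfl
      · exact absurd hvX hwX
      · rcases h1 with h1 | h1
        · exact absurd (h1 ▸ h2) hwX
        · exact h1.symm
    · rcases hv with rfl | rfl
      · rcases h1 with h1 | h1
        · exact h1.symm
        · exact absurd (h1 ▸ h2) hwX
      · exact absurd hvX hwX
  -- the global injection from boundary edges into missing colours
  set F : G.E → ℕ := fun e => g (vtx e) e with hFdef
  have hF_mem : ∀ e ∈ G.boundary X, F e ∈ G.missingOn k H.edges ψ (vtx e) :=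
    fun e he => hg2 (vtx e) e ⟨hbd_not e he, hvtx1 e⟩
  have hF_inj : Set.InjOn F (G.boundary X) := by
    intro e he f hf hef
    have h1 := hF_mem e he
    have h2 := hF_mem f hf
    have hv : vtx e = vtx f := by
      by_contra hne
      exact helem (vtx e) (hvtx2 e he) (vtx f) (hvtx2 f hf) hne (F e) h1 (hef ▸ h2)
    refine hg1 (vtx e) ⟨hbd_not e he, hvtx1 e⟩ ?_ ?_
    · rw [hv]; exact ⟨hbd_not f hf, hvtx1 f⟩
    · rw [show g (vtx e) f = g (vtx f) f from by rw [hv]]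
      exact hef
  -- injectivity of φ on the boundary and its partial inverse
  have hφinj : Set.InjOn φ (G.boundary X) := by
    intro e he f hf hef
    by_contra hne
    exact hb e he f hf hne hef
  set σ : ℕ → ℕ := fun β =>
    if h : ∃ e ∈ G.boundary X, φ e = β then F h.choose else 0 with hσdef
  set Bset : Set ℕ := φ '' (G.boundary X) with hBdef
  have hBfin : Bset.Finite := (Set.toFinite _).image φ
  have hσeq : ∀ e ∈ G.boundary X, σ (φ e) = F e := by
    intro e he
    have hex : ∃ e' ∈ G.boundary X, φ e' = φ e := ⟨e, he, rfl⟩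
    have h1 : hex.choose ∈ G.boundary X := hex.choose_spec.1
    have h2 : φ hex.choose = φ e := hex.choose_spec.2
    have h3 : hex.choose = e := hφinj h1 he h2
    simp only [hσdef, dif_pos hex, h3]
  -- apply the permutation-extension lemma
  obtain ⟨π, hπ1, _, hπ3⟩ := perm_extend_aux k hBfin.toFinset σ
    (by
      intro b hbm
      rw [Set.Finite.mem_toFinset] at hbm
      obtain ⟨e, he, rfl⟩ := hbm
      exact hφ.1 e (hbd_not e he))
    (by
      intro b hbm b' hbm' hbb
      rw [Set.Finite.coe_toFinset] at hbm hbm'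
      obtain ⟨e, he, rfl⟩ := hbm
      obtain ⟨e', he', rfl⟩ := hbm'
      rw [hσeq e he, hσeq e' he'] at hbb
      rw [hF_inj he he' hbb]
    )
    (by
      intro b hbm
      rw [Set.Finite.mem_toFinset] at hbm
      obtain ⟨e, he, rfl⟩ := hbm
      rw [hσeq e he]
      exact (hF_mem e he).1)
  refine ⟨π, fun e => if e ∈ H.edges then π (ψ e) else φ e, hπ1,
    fun e he => if_pos he, fun e he => if_neg he, ?_, ?_⟩
  · intro e _
    by_cases he : e ∈ H.edges
    · simp only [if_pos he]
      exact hπ1 _ (hψ.1 e he)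
    · simp only [if_neg he]
      exact hφ.1 e he
  · have key : ∀ e ∈ H.edges, ∀ f, f ∉ H.edges →
        (∃ v, v ∈ G.ends e ∧ v ∈ G.ends f) → π (ψ e) ≠ φ f := by
      rintro e he f hf ⟨v, hve, hvf⟩ hEq
      have hvX : v ∈ X := H.support e he v hve
      have hfb : f ∈ G.boundary X := hbdry f hf v hvf hvX
      have hmem : φ f ∈ hBfin.toFinset := by
        rw [Set.Finite.mem_toFinset]
        exact ⟨f, hfb, rfl⟩
      have h1 : π (σ (φ f)) = φ f := hπ3 _ hmem
      have hψe : ψ e = σ (φ f) := π.injective (by rw [h1, hEq])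
      have h2 := hF_mem f hfb
      have hvf' : v = vtx f := huniq f hfb v hvf hvX
      exact h2.2 e he (hvf' ▸ hve) (by rw [hψe, hσeq f hfb])
    intro e _ f _ hef hadj
    by_cases he : e ∈ H.edges <;> by_cases hf : f ∈ H.edges
    · simp only [if_pos he, if_pos hf]
      exact fun h => hψ.2 e he f hf hef hadj (π.injective h)
    · simp only [if_pos he, if_neg hf]
      exact key e he f hf hadj
    · simp only [if_neg he, if_pos hf]
      exact fun h => key f hf e he (by obtain ⟨v, h1, h2⟩ := hadj; exact ⟨v, h2, h1⟩) h.symm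
    · simp only [if_neg he, if_neg hf]
      exact hφ.2 e he f hf hef hadj
end

section
/- Let G be a multigraph with maximum degree Δ and maximum multiplicity μ ≥ 2, let e ∈ E_G(x,y), and let k = Δ+μ−1. Assume χ'(G) = k, φ is a k-edge-coloring of G, and V(G) is φ-elementary. (1) If F' is a maximal multi-fan at x with respect to e and φ in G, and x has no Δ-neighbor in G from V(F'), then d_G(z) = Δ−1 for all z ∈ V(F')∖{x} and every edge of F' is colored by a color missing at some vertex of V(F'). (2) Moreover, for i ∈ [k] with φ(e) ∉ φ̄(V(F')), if F' is maximal without any i-edge and F' contains no Δ-vertex of G in V(F')∖{x}, then there exists a vertex z* ∈ V(F')∖{x} with i ∈ φ̄(z*) and d_G(z*) = Δ−1. -/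
namespace Multigraph

section AuxLemmas

attribute [local instance] Classical.propDecidable

variable {G : Multigraph} {k : ℕ} {D : Set G.E} {c : G.E → ℕ}
  {x : G.V} {e₀ : G.E} {y₀ : G.V}

/-- Fan vertices are distinct from the center. -/
lemma MultiFan.vx_ne (F : MultiFan G k D c x e₀ y₀) (j : Fin (F.p + 1)) : F.vx j ≠ x := by
  intro h
  have hd := G.loopless (F.edge j)
  rw [F.ends_eq j, h] at hd
  exact hd (Sym2.mk_isDiag_iff.mpr rfl)

/-- Extending a multifan by one more edge at the end. -/
noncomputable def MultiFan.snocFan (F : MultiFan G k D c x e₀ y₀) (f : G.E) (z : G.V)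
    (hf : ∀ j, F.edge j ≠ f) (hz : G.ends f = s(x, z)) (j₀ : Fin (F.p + 1))
    (hcol : c f ∈ G.missingOn k D c (F.vx j₀)) : MultiFan G k D c x e₀ y₀ where
  p := F.p + 1
  edge := Fin.snoc F.edge f
  vx := Fin.snoc F.vx z
  edge_zero := by
    have h0 : ((0 : Fin (F.p + 2))) = Fin.castSucc 0 := rfl
    rw [h0, Fin.snoc_castSucc, F.edge_zero]
  vx_zero := by
    have h0 : ((0 : Fin (F.p + 2))) = Fin.castSucc 0 := rfl
    rw [h0, Fin.snoc_castSucc, F.vx_zero]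
  ends_eq := by
    intro i
    rcases Fin.eq_castSucc_or_eq_last i with ⟨i', rfl⟩ | rfl
    · simp only [Fin.snoc_castSucc]; exact F.ends_eq i'
    · simp only [Fin.snoc_last]; exact hz
  edge_inj := by
    intro a b hab
    rcases Fin.eq_castSucc_or_eq_last a with ⟨a', rfl⟩ | rfl <;>
      rcases Fin.eq_castSucc_or_eq_last b with ⟨b', rfl⟩ | rfl
    · rw [Fin.snoc_castSucc, Fin.snoc_castSucc] at hab
      exact congrArg Fin.castSucc (F.edge_inj hab)
    · rw [Fin.snoc_castSucc, Fin.snoc_last] at hab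
      exact absurd hab (hf a')
    · rw [Fin.snoc_castSucc, Fin.snoc_last] at hab
      exact absurd hab.symm (hf b')
    · rfl
  fan_cond := by
    intro i hi
    rcases Fin.eq_castSucc_or_eq_last i with ⟨i', rfl⟩ | rfl
    · have hi' : i' ≠ 0 := by
        intro h; apply hi; rw [h]; rfl
      obtain ⟨j, hj, hcj⟩ := F.fan_cond i' hi'
      refine ⟨Fin.castSucc j, ?_, ?_⟩
      · exact Fin.strictMono_castSucc hj
      · simpa only [Fin.snoc_castSucc] using hcj
    · refine ⟨Fin.castSucc j₀, Fin.castSucc_lt_last j₀, ?_⟩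
      simpa only [Fin.snoc_castSucc, Fin.snoc_last] using hcol

lemma MultiFan.subseq_snocFan (F : MultiFan G k D c x e₀ y₀) (f : G.E) (z : G.V)
    (hf : ∀ j, F.edge j ≠ f) (hz : G.ends f = s(x, z)) (j₀ : Fin (F.p + 1))
    (hcol : c f ∈ G.missingOn k D c (F.vx j₀)) :
    F.Subseq (F.snocFan f z hf hz j₀ hcol) :=
  ⟨Fin.castSucc, Fin.strictMono_castSucc, fun i =>
    ⟨by simp [MultiFan.snocFan, Fin.snoc_castSucc],
     by simp [MultiFan.snocFan, Fin.snoc_castSucc]⟩⟩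

/-- The set of colors missing at `v`, as a `Finset`. -/
noncomputable def missF (G : Multigraph) (k : ℕ) (φ : G.E → ℕ) (v : G.V) : Finset ℕ :=
  Finset.Icc 1 k \ (Finset.univ.filter fun e => v ∈ G.ends e).image φ

lemma mem_missF {φ : G.E → ℕ} {v : G.V} {i : ℕ} :
    i ∈ missF G k φ v ↔ i ∈ G.missingOn k Set.univ φ v := by
  simp only [missF, Finset.mem_sdiff, Finset.mem_Icc, Finset.mem_image, Finset.mem_filter,
    Finset.mem_univ, true_and, missingOn, Set.mem_setOf_eq, Set.mem_Icc, not_exists, not_and]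
  constructor
  · rintro ⟨h1, h2⟩
    exact ⟨h1, fun e _ he hce => h2 e he hce⟩
  · rintro ⟨h1, h2⟩
    exact ⟨h1, fun e he hce => h2 e (Set.mem_univ e) he hce⟩

lemma degree_add_card_missF {φ : G.E → ℕ} (hφ : G.IsProperColoring k φ) (v : G.V) :
    G.degree v + (missF G k φ v).card = k := by
  set Ev := Finset.univ.filter (fun e => v ∈ G.ends e) with hEv
  have hdeg : G.degree v = Ev.card := by
    rw [degree, show {e : G.E | v ∈ G.ends e} = (↑Ev : Set G.E) by
      ext e; simp [hEv]]
    exact Set.ncard_coe_finset _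
  have hinj : Set.InjOn φ (↑Ev : Set G.E) := by
    intro a ha b hb hab
    by_contra hne
    refine hφ.2 a (Set.mem_univ a) b (Set.mem_univ b) hne ⟨v, ?_, ?_⟩ hab
    · simpa [hEv] using ha
    · simpa [hEv] using hb
  have himg : (Ev.image φ).card = Ev.card := Finset.card_image_of_injOn hinj
  have hsub : Ev.image φ ⊆ Finset.Icc 1 k := by
    intro i hi
    obtain ⟨e, _, rfl⟩ := Finset.mem_image.mp hi
    have := hφ.1 e (Set.mem_univ e)
    simpa [Finset.mem_Icc, Set.mem_Icc] using this
  have hcardIcc : (Finset.Icc 1 k).card = k := by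
    rw [Nat.card_Icc]; omega
  have hsd : (missF G k φ v).card = (Finset.Icc 1 k).card - (Ev.image φ).card := by
    rw [missF]; exact Finset.card_sdiff_of_subset hsub
  have hle : (Ev.image φ).card ≤ (Finset.Icc 1 k).card := Finset.card_le_card hsub
  omega

lemma missF_disjoint {φ : G.E → ℕ} (helem : G.IsElementaryOn k Set.univ φ Set.univ)
    {u v : G.V} (h : u ≠ v) : Disjoint (missF G k φ u) (missF G k φ v) := by
  rw [Finset.disjoint_left]
  intro i hiu hiv
  have hem := helem u (Set.mem_univ u) v (Set.mem_univ v) h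
  exact (Set.eq_empty_iff_forall_notMem.mp hem i) ⟨mem_missF.mp hiu, mem_missF.mp hiv⟩

/-- The shared counting core. -/
lemma core_count {φ : G.E → ℕ} (hk : k + 1 = G.maxDegree + G.maxMult)
    (hφ : G.IsProperColoring k φ)
    (helem : G.IsElementaryOn k Set.univ φ Set.univ)
    (F : MultiFan G k Set.univ φ x e₀ y₀)
    (hdegT : ∀ j, G.degree (F.vx j) + 1 ≤ G.maxDegree)
    (hU : ((Finset.univ.image F.vx).biUnion (fun z => missF G k φ z)).card ≤ F.p + 1) :
    (∀ j, (missF G k φ (F.vx j)).card = G.maxMult) ∧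
    ((Finset.univ.image F.vx).biUnion (fun z => missF G k φ z)).card = F.p + 1 := by
  set T := Finset.univ.image F.vx with hT
  set U := T.biUnion (fun z => missF G k φ z) with hUdef
  have hUcard : U.card = ∑ z ∈ T, (missF G k φ z).card :=
    Finset.card_biUnion (fun a _ b _ hab => missF_disjoint helem hab)
  have hμle : ∀ z ∈ T, G.maxMult ≤ (missF G k φ z).card := by
    intro z hz
    obtain ⟨j, _, rfl⟩ := Finset.mem_image.mp hz
    have h1 := degree_add_card_missF hφ (F.vx j)
    have h2 := hdegT j
    omega
  have hlow : T.card * G.maxMult ≤ ∑ z ∈ T, (missF G k φ z).card := by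
    have := Finset.card_nsmul_le_sum T (fun z => (missF G k φ z).card) G.maxMult hμle
    simpa [smul_eq_mul] using this
  -- p + 1 ≤ T.card * μ
  have hmultle : ∀ z : G.V, G.mult x z ≤ G.maxMult := by
    intro z
    refine le_csSup ⟨Fintype.card G.E, ?_⟩ ⟨x, z, rfl⟩
    rintro m ⟨a, b, rfl⟩
    calc G.mult a b ≤ (Set.univ : Set G.E).ncard :=
          Set.ncard_le_ncard (Set.subset_univ _) Set.finite_univ
      _ = Fintype.card G.E := by rw [Set.ncard_univ, Nat.card_eq_fintype_card]
  have hcnt : ∀ z ∈ T, (Finset.univ.filter fun j => F.vx j = z).card ≤ G.maxMult := by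
    intro z hz
    refine le_trans ?_ (hmultle z)
    have : G.mult x z = (Finset.univ.filter fun e => G.ends e = s(x, z)).card := by
      rw [mult, show {e : G.E | G.ends e = s(x, z)} =
        (↑(Finset.univ.filter fun e => G.ends e = s(x, z)) : Set G.E) by ext e; simp]
      exact Set.ncard_coe_finset _
    rw [this]
    refine Finset.card_le_card_of_injOn F.edge ?_ ?_
    · intro j hj
      simp only [Finset.mem_coe, Finset.mem_filter, Finset.mem_univ, true_and] at hj ⊢
      rw [F.ends_eq j, hj]
    · intro a _ b _ hab
      exact F.edge_inj hab
  have hup : F.p + 1 ≤ T.card * G.maxMult := by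
    have h1 : (Finset.univ : Finset (Fin (F.p + 1))).card =
        ∑ z ∈ T, (Finset.univ.filter fun j => F.vx j = z).card :=
      Finset.card_eq_sum_card_image F.vx Finset.univ
    have h2 : ∑ z ∈ T, (Finset.univ.filter fun j => F.vx j = z).card ≤ T.card * G.maxMult := by
      have := Finset.sum_le_card_nsmul T (fun z => (Finset.univ.filter fun j => F.vx j = z).card)
        G.maxMult hcnt
      simpa [smul_eq_mul] using this
    have h3 : (Finset.univ : Finset (Fin (F.p + 1))).card = F.p + 1 := by simp
    omega
  have hsum : ∑ z ∈ T, (missF G k φ z).card = T.card * G.maxMult := by omega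
  have hall : ∀ z ∈ T, (missF G k φ z).card = G.maxMult := by
    intro z hz
    by_contra hne
    have hlt : G.maxMult < (missF G k φ z).card := lt_of_le_of_ne (hμle z hz) (Ne.symm hne)
    have : ∑ _z ∈ T, G.maxMult < ∑ z ∈ T, (missF G k φ z).card :=
      Finset.sum_lt_sum hμle ⟨z, hz, hlt⟩
    rw [Finset.sum_const, smul_eq_mul] at this
    omega
  refine ⟨fun j => hall (F.vx j) (Finset.mem_image_of_mem F.vx (Finset.mem_univ j)), by omega⟩

end AuxLemmas

end Multigraph

/-- **Lemma 3.2(d).** Let `G` have maximum degree `Δ`, maximum multiplicity `μ ≥ 2`, let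
`k = Δ+μ-1`, assume `χ'(G) = k`, `φ` is a `k`-edge-coloring of `G`, `V(G)` is
`φ`-elementary, and `e ∈ E_G(x,y)`.
(1) If `F'` is a maximal multi-fan at `x` with respect to `e` and `φ` in `G` and `x` has no
`Δ`-neighbor in `G` from `V(F')`, then `d_G(z) = Δ-1` for all `z ∈ V(F')∖{x}` and every edge
of `F'` is colored by a color missing at some vertex of `V(F')`.
(2) Moreover, for `i ∈ [k]` with `φ(e) ∉ φ̄(V(F'))`, if `F'` is maximal without any `i`-edge
and contains no `Δ`-vertex of `G` in `V(F')∖{x}`, then there is `z* ∈ V(F')∖{x}` with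
`i ∈ φ̄(z*)` and `d_G(z*) = Δ-1`. -/
theorem multifan_fully_colored (G : Multigraph) (k : ℕ)
    (hμ : 2 ≤ G.maxMult) (hk : k + 1 = G.maxDegree + G.maxMult)
    (hχ : G.chromIndex = k)
    (x y : G.V) (e₀ : G.E) (hends : G.ends e₀ = s(x, y))
    (φ : G.E → ℕ) (hφ : G.IsProperColoring k φ)
    (helem : G.IsElementaryOn k Set.univ φ Set.univ) :
    (∀ F' : Multigraph.MultiFan G k Set.univ φ x e₀ y, F'.IsMaximal →
      (∀ z ∈ F'.verts, (∃ f : G.E, G.ends f = s(x, z)) → G.degree z ≠ G.maxDegree) →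
      (∀ z ∈ F'.verts, z ≠ x → G.degree z = G.maxDegree - 1) ∧
      (∀ j, ∃ z ∈ F'.verts, φ (F'.edge j) ∈ G.missingOn k Set.univ φ z)) ∧
    (∀ F' : Multigraph.MultiFan G k Set.univ φ x e₀ y, ∀ i ∈ Set.Icc 1 k,
      φ e₀ ∉ (⋃ z ∈ F'.verts, G.missingOn k Set.univ φ z) →
      F'.IsMaximalWithout i →
      (∀ z ∈ F'.verts, z ≠ x → G.degree z ≠ G.maxDegree) →
      ∃ z' : G.V, z' ∈ F'.verts ∧ z' ≠ x ∧ i ∈ G.missingOn k Set.univ φ z' ∧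
        G.degree z' = G.maxDegree - 1) := by
    classical
  have hbdd : BddAbove (Set.range G.degree) := (Set.finite_range _).bddAbove
  have hdegle : ∀ v : G.V, G.degree v ≤ G.maxDegree := fun v => le_csSup hbdd ⟨v, rfl⟩
  -- injectivity of fan-edge colors
  have hFCinj : ∀ F' : Multigraph.MultiFan G k Set.univ φ x e₀ y,
      Function.Injective (fun j => φ (F'.edge j)) := by
    intro F' a b hab
    by_contra hne
    have hedne : F'.edge a ≠ F'.edge b := fun h => hne (F'.edge_inj h)
    refine hφ.2 (F'.edge a) (Set.mem_univ _) (F'.edge b) (Set.mem_univ _) hedne ⟨x, ?_, ?_⟩ hab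
    · rw [F'.ends_eq a]; exact Sym2.mem_mk_left x _
    · rw [F'.ends_eq b]; exact Sym2.mem_mk_left x _
  have hFCcard : ∀ F' : Multigraph.MultiFan G k Set.univ φ x e₀ y,
      (Finset.univ.image (fun j => φ (F'.edge j))).card = F'.p + 1 := by
    intro F'
    rw [Finset.card_image_of_injective _ (hFCinj F'), Finset.card_univ, Fintype.card_fin]
  -- the extension step: a missing color of a fan vertex which is on no fan edge
  -- yields a longer fan ending with an edge of that color.
  have hext : ∀ F' : Multigraph.MultiFan G k Set.univ φ x e₀ y,
      ∀ (α : ℕ) (j₀ : Fin (F'.p + 1)), α ∈ Multigraph.missF G k φ (F'.vx j₀) →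
      (∀ j, φ (F'.edge j) ≠ α) →
      ∃ F'' : Multigraph.MultiFan G k Set.univ φ x e₀ y, F''.p = F'.p + 1 ∧
        F'.Subseq F'' ∧ (∀ j : Fin (F''.p + 1), φ (F''.edge j) = α ∨
          ∃ j', F''.edge j = F'.edge j') := by
    intro F' α j₀ hα hnot
    have hαm : α ∈ G.missingOn k Set.univ φ (F'.vx j₀) := Multigraph.mem_missF.mp hα
    have hnx : α ∉ G.missingOn k Set.univ φ x := by
      intro hc
      have hem := helem (F'.vx j₀) (Set.mem_univ _) x (Set.mem_univ _) (F'.vx_ne j₀)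
      exact (Set.eq_empty_iff_forall_notMem.mp hem α) ⟨hαm, hc⟩
    have hexf : ∃ f, x ∈ G.ends f ∧ φ f = α := by
      by_contra hno
      push_neg at hno
      exact hnx ⟨hαm.1, fun e _ hxe => hno e hxe⟩
    obtain ⟨f, hxf, hfα⟩ := hexf
    obtain ⟨z, hz⟩ := Sym2.mem_iff_exists.mp hxf
    have hfnot : ∀ j, F'.edge j ≠ f := fun j h => hnot j (by rw [h, hfα])
    refine ⟨F'.snocFan f z hfnot hz j₀ (by rw [hfα]; exact hαm), rfl,
      F'.subseq_snocFan f z hfnot hz j₀ _, ?_⟩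
    intro j
    rcases Fin.eq_castSucc_or_eq_last j with ⟨j', rfl⟩ | rfl
    · right
      exact ⟨j', by simp [Multigraph.MultiFan.snocFan, Fin.snoc_castSucc]; exact Fin.snoc_castSucc (α := fun _ => G.E) _ _ _⟩
    · left
      simp [Multigraph.MultiFan.snocFan, Fin.snoc_last, hfα]
  constructor
  · -- Part (1)
    intro F' hmax hnb
    have hdegT : ∀ j, G.degree (F'.vx j) + 1 ≤ G.maxDegree := by
      intro j
      have hvm : F'.vx j ∈ F'.verts := Set.mem_insert_of_mem _ ⟨j, rfl⟩
      have hne := hnb (F'.vx j) hvm ⟨F'.edge j, F'.ends_eq j⟩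
      have := hdegle (F'.vx j)
      omega
    set T := Finset.univ.image F'.vx with hTdef
    set U := T.biUnion (fun z => Multigraph.missF G k φ z) with hUdef
    set FC := Finset.univ.image (fun j => φ (F'.edge j)) with hFCdef
    have hsubUFC : U ⊆ FC := by
      intro α hα
      obtain ⟨z, hzT, hαz⟩ := Finset.mem_biUnion.mp hα
      obtain ⟨j₀, _, rfl⟩ := Finset.mem_image.mp hzT
      by_contra hαFC
      have hnot : ∀ j, φ (F'.edge j) ≠ α := by
        intro j hj
        exact hαFC (Finset.mem_image.mpr ⟨j, Finset.mem_univ j, hj⟩)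
      obtain ⟨F'', hp, hsub, -⟩ := hext F' α j₀ hαz hnot
      have := hmax F'' hsub
      omega
    have hUle : U.card ≤ F'.p + 1 := by
      have := Finset.card_le_card hsubUFC
      rw [hFCcard F'] at this
      exact this
    obtain ⟨hmiss, hUeq⟩ := Multigraph.core_count hk hφ helem F' hdegT hUle
    have hUFC : U = FC := by
      refine Finset.eq_of_subset_of_card_le hsubUFC ?_
      rw [hFCcard F', hUeq]
    constructor
    · intro z hzv hzx
      rcases hzv with h | ⟨j, rfl⟩
      · exact absurd h hzx
      · have h1 := Multigraph.degree_add_card_missF hφ (F'.vx j)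
        have h2 := hmiss j
        have h3 := hdegT j
        omega
    · intro j
      have hjFC : φ (F'.edge j) ∈ FC := Finset.mem_image.mpr ⟨j, Finset.mem_univ j, rfl⟩
      rw [← hUFC] at hjFC
      obtain ⟨z, hzT, hαz⟩ := Finset.mem_biUnion.mp hjFC
      obtain ⟨j', _, rfl⟩ := Finset.mem_image.mp hzT
      exact ⟨F'.vx j', Set.mem_insert_of_mem _ ⟨j', rfl⟩, Multigraph.mem_missF.mp hαz⟩
  · -- Part (2)
    intro F' i hi hnot0 hmaxw hnoΔ
    have hdegT : ∀ j, G.degree (F'.vx j) + 1 ≤ G.maxDegree := by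
      intro j
      have hvm : F'.vx j ∈ F'.verts := Set.mem_insert_of_mem _ ⟨j, rfl⟩
      have hne := hnoΔ (F'.vx j) hvm (F'.vx_ne j)
      have := hdegle (F'.vx j)
      omega
    set T := Finset.univ.image F'.vx with hTdef
    set U := T.biUnion (fun z => Multigraph.missF G k φ z) with hUdef
    set FC := Finset.univ.image (fun j => φ (F'.edge j)) with hFCdef
    have he0FC : φ e₀ ∈ FC :=
      Finset.mem_image.mpr ⟨0, Finset.mem_univ 0, by rw [F'.edge_zero]⟩
    have hnotU : ∀ α ∈ U, α ≠ φ e₀ := by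
      intro α hα hαe
      obtain ⟨z, hzT, hαz⟩ := Finset.mem_biUnion.mp hα
      obtain ⟨j₀, _, rfl⟩ := Finset.mem_image.mp hzT
      apply hnot0
      refine Set.mem_biUnion (Set.mem_insert_of_mem _ ⟨j₀, rfl⟩) ?_
      rw [← hαe]
      exact Multigraph.mem_missF.mp hαz
    have hsub2 : U \ {i} ⊆ FC.erase (φ e₀) := by
      intro α hα
      rw [Finset.mem_sdiff, Finset.mem_singleton] at hα
      obtain ⟨hαU, hαi⟩ := hα
      refine Finset.mem_erase.mpr ⟨hnotU α hαU, ?_⟩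
      obtain ⟨z, hzT, hαz⟩ := Finset.mem_biUnion.mp hαU
      obtain ⟨j₀, _, rfl⟩ := Finset.mem_image.mp hzT
      by_contra hαFC
      have hnot : ∀ j, φ (F'.edge j) ≠ α := by
        intro j hj
        exact hαFC (Finset.mem_image.mpr ⟨j, Finset.mem_univ j, hj⟩)
      obtain ⟨F'', hp, hsub, hcases⟩ := hext F' α j₀ hαz hnot
      have hnoc : F''.NoColor i := by
        intro j _
        rcases hcases j with h | ⟨j', hj'⟩
        · rw [h]; exact hαi
        · rw [hj']; exact hmaxw.1 j' (Set.mem_univ _)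
      have := hmaxw.2 F'' hnoc hsub
      omega
    have hUle : U.card ≤ F'.p + 1 := by
      have h1 : (U \ {i}).card ≤ F'.p := by
        have := Finset.card_le_card hsub2
        rw [Finset.card_erase_of_mem he0FC, hFCcard F'] at this
        omega
      have h2 : U.card ≤ (U \ {i}).card + 1 := by
        have : U ⊆ (U \ {i}) ∪ {i} := by
          intro a ha
          by_cases hai : a = i
          · exact Finset.mem_union_right _ (Finset.mem_singleton.mpr hai)
          · exact Finset.mem_union_left _ (Finset.mem_sdiff.mpr ⟨ha, fun h =>
              hai (Finset.mem_singleton.mp h)⟩)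
        calc U.card ≤ ((U \ {i}) ∪ {i}).card := Finset.card_le_card this
          _ ≤ (U \ {i}).card + ({i} : Finset ℕ).card := Finset.card_union_le _ _
          _ = (U \ {i}).card + 1 := by rw [Finset.card_singleton]
      omega
    obtain ⟨hmiss, hUeq⟩ := Multigraph.core_count hk hφ helem F' hdegT hUle
    have hiU : i ∈ U := by
      by_contra hiU
      have hUsd : U \ {i} = U := by
        apply Finset.sdiff_eq_self_of_disjoint
        rw [Finset.disjoint_singleton_right]
        exact hiU
      have h1 : (U \ {i}).card ≤ F'.p := by
        have := Finset.card_le_card hsub2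
        rw [Finset.card_erase_of_mem he0FC, hFCcard F'] at this
        omega
      rw [hUsd, hUeq] at h1
      omega
    obtain ⟨z, hzT, hzi⟩ := Finset.mem_biUnion.mp hiU
    obtain ⟨j, _, rfl⟩ := Finset.mem_image.mp hzT
    refine ⟨F'.vx j, Set.mem_insert_of_mem _ ⟨j, rfl⟩, F'.vx_ne j,
      Multigraph.mem_missF.mp hzi, ?_⟩
    have h1 := Multigraph.degree_add_card_missF hφ (F'.vx j)
    have h2 := hmiss j
    have h3 := hdegT j
    omega
end
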